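/- Let G be any real n×n matrix with GW = 0 and GZ̃ = Z̃, and suppose ν is a random vector in ℝⁿ with independent mean-zero coordinates of common variance σ²_ν and x = Z̃π + Wδ + ν, ℓ̃ = Z̃π. Then the mean squared error of the leniency measure Gx satisfies E[‖Gx − ℓ̃‖²] = σ²_ν·tr(GᵀG). Consequently, if M_{ii} ≠ H_{ii} for all i and the Hadamard square of M − H is invertible, then with G_UJIVE = H − diag(H_{ii}/(M_{ii} − H_{ii}))·(M − H) and G_FEJIV = H − (M − H)·diag(((M−H)⊙(M−H))⁻¹ diag-vector(H))·(M − H), one has E[‖G_UJIVE·x − ℓ̃‖²] ≤ E[‖G_FEJIV·x − ℓ̃‖²]. -/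

import Mathlib

open MeasureTheory Matrix BigOperators

private lemma isUnit_of_rank_eq_card {m : ℕ} (A : Matrix (Fin m) (Fin m) ℝ)
    (h : A.rank = m) : IsUnit A := by
  rw [← Matrix.mulVec_surjective_iff_isUnit]
  have hr : LinearMap.range A.mulVecLin = ⊤ := by
    apply Submodule.eq_top_of_finrank_eq
    rw [← Matrix.rank, h]
    simp
  intro v
  obtain ⟨w, hw⟩ := LinearMap.range_eq_top.mp hr v
  exact ⟨w, hw⟩

private lemma trace_transpose_mul {m : ℕ} (G : Matrix (Fin m) (Fin m) ℝ) :
    (Gᵀ * G).trace = ∑ i, ∑ j, (G i j) ^ 2 := by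
  rw [Matrix.trace]
  simp only [Matrix.diag, Matrix.mul_apply, Matrix.transpose_apply, sq]
  exact Finset.sum_comm

private lemma row_ineq {n : ℕ} (i : Fin n) (h q s : Fin n → ℝ)
    (hqpos : 0 < q i) (hq2 : ∑ j, (q j)^2 = q i)
    (hhq : ∑ j, h j * q j = 0) (hhs : ∑ j, h j * s j = 0)
    (hsq : ∑ j, s j * q j = h i) :
    ∑ j, (h j - (h i / q i) * q j)^2 ≤ ∑ j, (h j - s j)^2 := by
  have key : (h i)^2 ≤ (∑ j, (s j)^2) * q i := by
    calc (h i)^2 = (∑ j, s j * q j)^2 := by rw [hsq]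
    _ ≤ (∑ j, (s j)^2) * (∑ j, (q j)^2) := Finset.sum_mul_sq_le_sq_mul_sq _ _ _
    _ = (∑ j, (s j)^2) * q i := by rw [hq2]
  have expandL : ∑ j, (h j - (h i / q i) * q j)^2
      = ∑ j, (h j)^2 + (h i)^2 / q i := by
    have e : ∀ j, (h j - (h i / q i) * q j)^2
        = (h j)^2 - (2*(h i / q i))*(h j * q j) + ((h i / q i)^2) * (q j)^2 := fun j => by ring
    simp_rw [e]
    rw [Finset.sum_add_distrib, Finset.sum_sub_distrib, ← Finset.mul_sum, ← Finset.mul_sum,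
      hhq, hq2]
    field_simp
    ring
  have expandR : ∑ j, (h j - s j)^2 = ∑ j, (h j)^2 - 0 + ∑ j, (s j)^2 := by
    have e : ∀ j, (h j - s j)^2 = (h j)^2 - 2*(h j * s j) + (s j)^2 := fun j => by ring
    simp_rw [e]
    rw [Finset.sum_add_distrib, Finset.sum_sub_distrib, ← Finset.mul_sum, hhs, mul_zero]
  have hd : (h i)^2 / q i ≤ ∑ j, (s j)^2 := by
    rw [div_le_iff₀ hqpos]; exact key
  rw [expandL, expandR]
  linarith

/-- For any `G` with `GW = 0` and `GZ̃ = Z̃`, if `ν` has independent mean-zero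
coordinates of common variance `σ²_ν` and `x = Z̃π + Wδ + ν`, then
`E[‖Gx − ℓ̃‖²] = σ²_ν·tr(GᵀG)`. Consequently, if `M_{ii} ≠ H_{ii}` for all `i` and the
Hadamard square of `M − H` is invertible, the UJIVE leniency measure has mean squared error
no larger than that of FEJIV. -/
theorem stmt11
    {Ω : Type*} [MeasurableSpace Ω] (μ : Measure Ω) [IsProbabilityMeasure μ]
    (n K L : ℕ) (hn : 1 ≤ n) (hK : 1 ≤ K) (hL : 1 ≤ L)
    (W : Matrix (Fin n) (Fin L) ℝ) (Z : Matrix (Fin n) (Fin K) ℝ)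
    (hWrank : W.rank = L) (hZrank : Z.rank = K) (hWZ : Wᵀ * Z = 0)
    (M H : Matrix (Fin n) (Fin n) ℝ)
    (hM : M = 1 - W * (Wᵀ * W)⁻¹ * Wᵀ)
    (hH : H = Z * (Zᵀ * Z)⁻¹ * Zᵀ)
    (ν : Ω → Fin n → ℝ)
    (hmeas : ∀ i, Measurable (fun ω => ν ω i))
    (hindep : ProbabilityTheory.iIndepFun
      (fun i ω => ν ω i) μ)
    (hνL2 : ∀ i, MemLp (fun ω => ν ω i) 2 μ)
    (hνmean : ∀ i, ∫ ω, ν ω i ∂μ = 0)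
    (σνsq : ℝ) (hhomν : ∀ i, ∫ ω, (ν ω i) ^ 2 ∂μ = σνsq)
    (π : Fin K → ℝ) (δ : Fin L → ℝ)
    (x : Ω → Fin n → ℝ) (ℓ : Fin n → ℝ)
    (hx : ∀ ω, x ω = Z *ᵥ π + W *ᵥ δ + ν ω)
    (hℓ : ℓ = Z *ᵥ π) :
    (∀ G : Matrix (Fin n) (Fin n) ℝ, G * W = 0 → G * Z = Z →
      ∫ ω, ∑ i, ((G *ᵥ x ω) i - ℓ i) ^ 2 ∂μ = σνsq * (Gᵀ * G).trace) ∧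
    ((∀ i, M i i ≠ H i i) → IsUnit (Matrix.hadamard (M - H) (M - H)) →
      ∀ GU GF : Matrix (Fin n) (Fin n) ℝ,
        GU = H - Matrix.diagonal (fun i => H i i / (M i i - H i i)) * (M - H) →
        GF = H - (M - H) * Matrix.diagonal
          ((Matrix.hadamard (M - H) (M - H))⁻¹ *ᵥ (fun i => H i i)) * (M - H) →
        ∫ ω, ∑ i, ((GU *ᵥ x ω) i - ℓ i) ^ 2 ∂μ
          ≤ ∫ ω, ∑ i, ((GF *ᵥ x ω) i - ℓ i) ^ 2 ∂μ) := by
  -- ## Part 1: the MSE formula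
  have hint : ∀ j k : Fin n, Integrable (fun ω => ν ω j * ν ω k) μ := by
    intro j k
    have h1 := (hνL2 j).integrable_sq
    have h2 := (hνL2 k).integrable_sq
    have hb : Integrable (fun ω => ((ν ω j)^2 + (ν ω k)^2)/2) μ := (h1.add h2).div_const 2
    refine hb.mono' (((hmeas j).mul (hmeas k)).aestronglyMeasurable) ?_
    filter_upwards with ω
    rw [Real.norm_eq_abs]
    rcases abs_cases (ν ω j * ν ω k) with ⟨h, _⟩ | ⟨h, _⟩ <;> rw [h] <;>
      nlinarith [sq_nonneg (ν ω j - ν ω k), sq_nonneg (ν ω j + ν ω k)]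
  have hcov : ∀ j k : Fin n, ∫ ω, ν ω j * ν ω k ∂μ = if j = k then σνsq else 0 := by
    intro j k
    by_cases hjk : j = k
    · subst hjk
      simp only [if_pos rfl]
      simpa [sq] using hhomν j
    · rw [if_neg hjk]
      have hind : ProbabilityTheory.IndepFun (fun ω => ν ω j) (fun ω => ν ω k) μ :=
        hindep.indepFun hjk
      have h0 := hind.integral_mul_eq_mul_integral ((hνL2 j).integrable one_le_two).aestronglyMeasurable
        ((hνL2 k).integrable one_le_two).aestronglyMeasurable
      simp only [Pi.mul_apply] at h0
      rw [show (fun ω => ν ω j * ν ω k) = (fun ω => ν ω j) * (fun ω => ν ω k) from rfl]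
      exact h0.trans (by rw [hνmean j, zero_mul])
  have hpart1 : ∀ G : Matrix (Fin n) (Fin n) ℝ, G * W = 0 → G * Z = Z →
      ∫ ω, ∑ i, ((G *ᵥ x ω) i - ℓ i) ^ 2 ∂μ = σνsq * (Gᵀ * G).trace := by
    intro G hGW hGZ
    have key : ∀ ω i, (G *ᵥ x ω) i - ℓ i = ∑ j, G i j * ν ω j := by
      intro ω i
      rw [hx, hℓ]
      have : G *ᵥ (Z *ᵥ π + W *ᵥ δ + ν ω) = Z *ᵥ π + (G *ᵥ ν ω) := by
        rw [Matrix.mulVec_add, Matrix.mulVec_add, Matrix.mulVec_mulVec, Matrix.mulVec_mulVec,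
          hGZ, hGW, Matrix.zero_mulVec, add_zero]
      rw [this]
      simp [Matrix.mulVec, dotProduct]
    have expand : ∀ ω, ∑ i, ((G *ᵥ x ω) i - ℓ i) ^ 2
        = ∑ i : Fin n, ∑ j : Fin n, ∑ k : Fin n, G i j * G i k * (ν ω j * ν ω k) := by
      intro ω
      refine Finset.sum_congr rfl fun i _ => ?_
      rw [key ω i, sq, Finset.sum_mul_sum]
      exact Finset.sum_congr rfl fun j _ => Finset.sum_congr rfl fun k _ => by ring
    simp_rw [expand]
    rw [integral_finset_sum _ (fun i _ => integrable_finset_sum _ (fun j _ =>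
      integrable_finset_sum _ (fun k _ => ((hint j k).const_mul _))))]
    have step : ∀ i : Fin n,
        ∫ ω, ∑ j : Fin n, ∑ k : Fin n, G i j * G i k * (ν ω j * ν ω k) ∂μ
        = ∑ j : Fin n, G i j ^ 2 * σνsq := by
      intro i
      rw [integral_finset_sum _ (fun j _ => integrable_finset_sum _
        (fun k _ => ((hint j k).const_mul _)))]
      refine Finset.sum_congr rfl fun j _ => ?_
      rw [integral_finset_sum _ (fun k _ => ((hint j k).const_mul _))]
      rw [Finset.sum_eq_single j]
      · rw [integral_const_mul, hcov j j, if_pos rfl, sq]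
      · intro k _ hkj
        rw [integral_const_mul, hcov j k, if_neg (Ne.symm hkj), mul_zero]
      · intro hj; exact absurd (Finset.mem_univ j) hj
    simp_rw [step]
    rw [Matrix.trace]
    simp only [Matrix.diag, Matrix.mul_apply, Matrix.transpose_apply]
    rw [Finset.mul_sum, Finset.sum_comm]
    refine Finset.sum_congr rfl fun i _ => ?_
    rw [Finset.mul_sum]
    exact Finset.sum_congr rfl fun j _ => by ring
  -- ## Matrix algebra facts
  have hZZ : IsUnit (Zᵀ * Z).det := by
    rw [← Matrix.isUnit_iff_isUnit_det]
    exact isUnit_of_rank_eq_card _ (by rw [Matrix.rank_transpose_mul_self, hZrank])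
  have hWW : IsUnit (Wᵀ * W).det := by
    rw [← Matrix.isUnit_iff_isUnit_det]
    exact isUnit_of_rank_eq_card _ (by rw [Matrix.rank_transpose_mul_self, hWrank])
  have hZtW : Zᵀ * W = 0 := by
    have := congrArg Matrix.transpose hWZ
    simpa [Matrix.transpose_mul] using this
  have hHZ : H * Z = Z := by
    rw [hH, Matrix.mul_assoc, Matrix.mul_assoc, Matrix.nonsing_inv_mul _ hZZ, Matrix.mul_one]
  have hHW : H * W = 0 := by
    rw [hH, Matrix.mul_assoc, Matrix.mul_assoc, hZtW, Matrix.mul_zero, Matrix.mul_zero]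
  have hWtH : Wᵀ * H = 0 := by
    rw [hH, ← Matrix.mul_assoc, ← Matrix.mul_assoc, hWZ, Matrix.zero_mul, Matrix.zero_mul]
  have hMZ : M * Z = Z := by
    rw [hM, Matrix.sub_mul, Matrix.one_mul, Matrix.mul_assoc, Matrix.mul_assoc, hWZ,
      Matrix.mul_zero, Matrix.mul_zero, sub_zero]
  have hMW : M * W = 0 := by
    rw [hM, Matrix.sub_mul, Matrix.one_mul, Matrix.mul_assoc, Matrix.mul_assoc,
      Matrix.nonsing_inv_mul _ hWW, Matrix.mul_one, sub_self]
  have hHsymm : Hᵀ = H := by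
    rw [hH]
    simp [Matrix.transpose_mul, Matrix.transpose_nonsing_inv, Matrix.mul_assoc]
  have hMsymm : Mᵀ = M := by
    rw [hM]
    simp [Matrix.transpose_sub, Matrix.transpose_mul, Matrix.transpose_nonsing_inv,
      Matrix.mul_assoc]
  have hHH : H * H = H := by
    nth_rewrite 2 [hH]
    rw [← Matrix.mul_assoc, ← Matrix.mul_assoc, hHZ, ← hH]
  have hMH : M * H = H := by
    rw [hM, Matrix.sub_mul, Matrix.one_mul, Matrix.mul_assoc, Matrix.mul_assoc, hWtH,
      Matrix.mul_zero, Matrix.mul_zero, sub_zero]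
  have hHM : H * M = H := by
    have := congrArg Matrix.transpose hMH
    rwa [Matrix.transpose_mul, hHsymm, hMsymm] at this
  have hMM : M * M = M := by
    nth_rewrite 2 [hM]
    rw [Matrix.mul_sub, Matrix.mul_one, ← Matrix.mul_assoc, ← Matrix.mul_assoc, hMW,
      Matrix.zero_mul, Matrix.zero_mul, sub_zero]
  set Q := M - H with hQdef
  have hQsymm : Qᵀ = Q := by rw [hQdef, Matrix.transpose_sub, hMsymm, hHsymm]
  have hQQ : Q * Q = Q := by
    rw [hQdef, Matrix.sub_mul, Matrix.mul_sub, Matrix.mul_sub, hMM, hMH, hHM, hHH]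
    abel
  have hHQ : H * Q = 0 := by rw [hQdef, Matrix.mul_sub, hHM, hHH, sub_self]
  have hQW : Q * W = 0 := by rw [hQdef, Matrix.sub_mul, hMW, hHW, sub_self]
  have hQZ : Q * Z = 0 := by rw [hQdef, Matrix.sub_mul, hMZ, hHZ, sub_self]
  have hQsym : ∀ i j, Q j i = Q i j := fun i j =>
    (Matrix.transpose_apply Q i j).symm.trans (by rw [hQsymm])
  have hQdiag : ∀ i, Q i i = ∑ j, (Q i j) ^ 2 := by
    intro i
    conv_lhs => rw [← hQQ]
    rw [Matrix.mul_apply]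
    exact Finset.sum_congr rfl fun j _ => by rw [hQsym i j, sq]
  -- ## Part 2
  refine ⟨hpart1, ?_⟩
  intro hne hunit GU GF hGU hGF
  have hQpos : ∀ i, 0 < Q i i := by
    intro i
    rcases lt_or_eq_of_le (Finset.sum_nonneg fun j _ => sq_nonneg (Q i j)) with h | h
    · rw [hQdiag i]; exact h
    · exfalso; apply hne i
      have h0 : Q i i = 0 := by rw [hQdiag i, ← h]
      rw [hQdef, Matrix.sub_apply] at h0
      linarith
  set d : Fin n → ℝ := (Matrix.hadamard Q Q)⁻¹ *ᵥ (fun i => H i i) with hd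
  set s : Matrix (Fin n) (Fin n) ℝ := Q * Matrix.diagonal d * Q with hs
  have hssymm : ∀ i j, s j i = s i j := by
    intro i j
    have hts : sᵀ = s := by
      rw [hs, Matrix.transpose_mul, Matrix.transpose_mul, Matrix.diagonal_transpose, hQsymm,
        Matrix.mul_assoc]
    exact (Matrix.transpose_apply s i j).symm.trans (by rw [hts])
  have hsQ : s * Q = s := by
    rw [hs, Matrix.mul_assoc, Matrix.mul_assoc, hQQ, ← Matrix.mul_assoc]
  have hHs : H * s = 0 := by
    rw [hs, ← Matrix.mul_assoc, ← Matrix.mul_assoc, hHQ, Matrix.zero_mul, Matrix.zero_mul]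
  have hsii : ∀ i, s i i = H i i := by
    intro i
    have h1 : s i i = ∑ j, (Matrix.hadamard Q Q) i j * d j := by
      rw [hs, Matrix.mul_apply]
      refine Finset.sum_congr rfl fun j _ => ?_
      rw [Matrix.mul_diagonal, hQsym i j, Matrix.hadamard_apply]
      ring
    have h2 : (Matrix.hadamard Q Q) *ᵥ d = (fun i => H i i) := by
      rw [hd, Matrix.mulVec_mulVec, Matrix.mul_nonsing_inv _
        ((Matrix.isUnit_iff_isUnit_det _).mp hunit), Matrix.one_mulVec]
    calc s i i = ((Matrix.hadamard Q Q) *ᵥ d) i := by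
          rw [Matrix.mulVec, dotProduct]; exact h1
    _ = H i i := by rw [h2]
  -- constraints for GU and GF
  have hGUW : GU * W = 0 := by
    rw [hGU, Matrix.sub_mul, hHW, Matrix.mul_assoc, hQW, Matrix.mul_zero, sub_zero]
  have hGUZ : GU * Z = Z := by
    rw [hGU, Matrix.sub_mul, hHZ, Matrix.mul_assoc, hQZ, Matrix.mul_zero, sub_zero]
  have hGF' : GF = H - s := by rw [hGF, hs, hd]
  have hGFW : GF * W = 0 := by
    rw [hGF', Matrix.sub_mul, hHW, hs, Matrix.mul_assoc, Matrix.mul_assoc, hQW,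
      Matrix.mul_zero, Matrix.mul_zero, sub_zero]
  have hGFZ : GF * Z = Z := by
    rw [hGF', Matrix.sub_mul, hHZ, hs, Matrix.mul_assoc, Matrix.mul_assoc, hQZ,
      Matrix.mul_zero, Matrix.mul_zero, sub_zero]
  rw [hpart1 GU hGUW hGUZ, hpart1 GF hGFW hGFZ]
  have hσ : 0 ≤ σνsq := by
    rw [← hhomν ⟨0, hn⟩]
    exact integral_nonneg fun ω => sq_nonneg _
  apply mul_le_mul_of_nonneg_left _ hσ
  rw [_root_.trace_transpose_mul, _root_.trace_transpose_mul]
  apply Finset.sum_le_sum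
  intro i _
  have eU : ∀ j, GU i j = H i j - (H i i / Q i i) * Q i j := by
    intro j
    rw [hGU]
    simp only [Matrix.sub_apply, Matrix.diagonal_mul]
    rfl
  have eF : ∀ j, GF i j = H i j - s i j := by
    intro j
    rw [hGF']
    simp [Matrix.sub_apply]
  simp_rw [eU, eF]
  have hhq : ∑ j, H i j * Q i j = 0 := by
    have h0 : (H * Q) i i = 0 := by rw [hHQ]; simp
    rw [Matrix.mul_apply] at h0
    calc ∑ j, H i j * Q i j = ∑ j, H i j * Q j i :=
          Finset.sum_congr rfl fun j _ => by rw [hQsym i j]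
    _ = 0 := h0
  have hhs : ∑ j, H i j * s i j = 0 := by
    have h0 : (H * s) i i = 0 := by rw [hHs]; simp
    rw [Matrix.mul_apply] at h0
    calc ∑ j, H i j * s i j = ∑ j, H i j * s j i :=
          Finset.sum_congr rfl fun j _ => by rw [hssymm i j]
    _ = 0 := h0
  have hsq : ∑ j, s i j * Q i j = H i i := by
    have h0 : (s * Q) i i = s i i := by rw [hsQ]
    rw [Matrix.mul_apply] at h0
    calc ∑ j, s i j * Q i j = ∑ j, s i j * Q j i :=
          Finset.sum_congr rfl fun j _ => by rw [hQsym i j]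
    _ = s i i := h0
    _ = H i i := hsii i
  exact row_ineq i (fun j => H i j) (fun j => Q i j) (fun j => s i j)
    (hQpos i) (hQdiag i).symm hhq hhs hsq
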